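/- In the MRNG (where the pruning witness needs no attribute condition), the hereditary property fails: there exists a finite point set with attributes and an attribute interval I such that the subgraph of the MRNG induced by the in-range points is not equal to the MRNG built directly on the in-range points (in particular, the induced subgraph can be disconnected while the direct MRNG is connected). -/

import Mathlib

def DistinctDistances {V : Type*} (δ : V → V → ℝ) : Prop :=
  ∀ x y z w : V, x ≠ y → z ≠ w → δ x y = δ z w → (x = z ∧ y = w) ∨ (x = w ∧ y = z)

/-- MRNG edge on the vertex subset `W`: `x, y ∈ W` are joined iff no third
node of `W` is closer to both endpoints. -/
def MRNGEdgeOn {V : Type*} (δ : V → V → ℝ) (W : Set V) (x y : V) : Prop :=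
  x ∈ W ∧ y ∈ W ∧ x ≠ y ∧ ¬ ∃ z ∈ W, δ x z < δ x y ∧ δ y z < δ x y

noncomputable def MRNGPts : Fin 3 → EuclideanSpace ℝ (Fin 2) :=
  ![(WithLp.equiv 2 _).symm ![0,0], (WithLp.equiv 2 _).symm ![3,0],
    (WithLp.equiv 2 _).symm ![1,1]]

lemma mrng_d01 : dist (MRNGPts 0) (MRNGPts 1) = 3 := by
  rw [EuclideanSpace.dist_eq, show (3:ℝ) = Real.sqrt 9 by
    rw [show (9:ℝ) = 3^2 by norm_num, Real.sqrt_sq (by norm_num)]]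
  congr 1
  norm_num [MRNGPts, Fin.sum_univ_two, Real.dist_eq]

lemma mrng_d02 : dist (MRNGPts 0) (MRNGPts 2) = Real.sqrt 2 := by
  rw [EuclideanSpace.dist_eq]
  congr 1
  norm_num [MRNGPts, Fin.sum_univ_two, Real.dist_eq, Matrix.cons_val_two, Matrix.tail_cons,
    Matrix.head_cons]

lemma mrng_d12 : dist (MRNGPts 1) (MRNGPts 2) = Real.sqrt 5 := by
  rw [EuclideanSpace.dist_eq]
  congr 1
  norm_num [MRNGPts, Fin.sum_univ_two, Real.dist_eq, Matrix.cons_val_two, Matrix.tail_cons,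
    Matrix.head_cons]

lemma sqrt2_lt_3 : Real.sqrt 2 < 3 := by
  nlinarith [Real.sq_sqrt (show (0:ℝ) ≤ 2 by norm_num), Real.sqrt_nonneg 2]

lemma sqrt5_lt_3 : Real.sqrt 5 < 3 := by
  nlinarith [Real.sq_sqrt (show (0:ℝ) ≤ 5 by norm_num), Real.sqrt_nonneg 5]

lemma sqrt2_ne_sqrt5 : Real.sqrt 2 ≠ Real.sqrt 5 := by
  intro h
  have h2 := Real.sq_sqrt (show (0:ℝ) ≤ 2 by norm_num)
  have h5 := Real.sq_sqrt (show (0:ℝ) ≤ 5 by norm_num)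
  rw [h, h5] at h2
  norm_num at h2

/-- The hereditary property fails for the MRNG: there is a finite attributed
point set (with distinct pairwise distances and distinct attributes) and an
attribute interval such that the subgraph of the MRNG induced by the in-range
points differs from the MRNG built directly on the in-range points. -/
theorem mrng_hereditary_fails :
    ∃ (n : ℕ) (p : Fin n → EuclideanSpace ℝ (Fin 2)) (a : Fin n → ℝ)
      (al ar : ℝ),
      DistinctDistances (fun i j : Fin n => dist (p i) (p j)) ∧
      Function.Injective a ∧
      ¬ (∀ x y : Fin n, a x ∈ Set.Icc al ar → a y ∈ Set.Icc al ar →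
          (MRNGEdgeOn (fun i j : Fin n => dist (p i) (p j)) Set.univ x y ↔
           MRNGEdgeOn (fun i j : Fin n => dist (p i) (p j))
             {i | a i ∈ Set.Icc al ar} x y)) := by
  refine ⟨3, MRNGPts, (fun i => (i : ℝ)), 0, 1, ?_, ?_, ?_⟩
  · -- distinct distances
    intro x y z w hxy hzw h
    have h01 := mrng_d01
    have h02 := mrng_d02
    have h12 := mrng_d12
    have h10 : dist (MRNGPts 1) (MRNGPts 0) = 3 := by rw [dist_comm]; exact mrng_d01
    have h20 : dist (MRNGPts 2) (MRNGPts 0) = Real.sqrt 2 := by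
      rw [dist_comm]; exact mrng_d02
    have h21 : dist (MRNGPts 2) (MRNGPts 1) = Real.sqrt 5 := by
      rw [dist_comm]; exact mrng_d12
    have hne1 : (3:ℝ) ≠ Real.sqrt 2 := sqrt2_lt_3.ne'
    have hne2 : (3:ℝ) ≠ Real.sqrt 5 := sqrt5_lt_3.ne'
    have hne3 : Real.sqrt 2 ≠ Real.sqrt 5 := sqrt2_ne_sqrt5
    fin_cases x <;> fin_cases y <;> fin_cases z <;> fin_cases w <;> simp_all
  · -- injectivity of attributes
    intro x y h
    fin_cases x <;> fin_cases y <;> simp_all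
  · -- hereditary property fails at the pair (0,1)
    intro H
    have h0 : ((0 : Fin 3) : ℝ) ∈ Set.Icc (0:ℝ) 1 := by norm_num
    have h1 : ((1 : Fin 3) : ℝ) ∈ Set.Icc (0:ℝ) 1 := by norm_num
    have hR : MRNGEdgeOn (fun i j : Fin 3 => dist (MRNGPts i) (MRNGPts j))
        {i | ((i : Fin 3) : ℝ) ∈ Set.Icc (0:ℝ) 1} 0 1 := by
      refine ⟨h0, h1, by decide, ?_⟩
      rintro ⟨z, hz, hz1, hz2⟩
      fin_cases z
      · have hz2' : dist (MRNGPts 1) (MRNGPts 0) < dist (MRNGPts 0) (MRNGPts 1) := hz2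
        rw [dist_comm] at hz2'
        exact absurd hz2' (lt_irrefl _)
      · have hz1' : dist (MRNGPts 0) (MRNGPts 1) < dist (MRNGPts 0) (MRNGPts 1) := hz1
        exact absurd hz1' (lt_irrefl _)
      · have hz' : ((2 : Fin 3) : ℝ) ∈ Set.Icc (0:ℝ) 1 := hz
        norm_num at hz'
    have hL := (H 0 1 h0 h1).mpr hR
    apply hL.2.2.2
    refine ⟨2, Set.mem_univ _, ?_, ?_⟩
    · show dist (MRNGPts 0) (MRNGPts 2) < dist (MRNGPts 0) (MRNGPts 1)
      rw [mrng_d01, mrng_d02]; exact sqrt2_lt_3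
    · show dist (MRNGPts 1) (MRNGPts 2) < dist (MRNGPts 0) (MRNGPts 1)
      rw [mrng_d01, mrng_d12]; exact sqrt5_lt_3
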